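/- Let a : ℕ → ℕ (indexed from 1) satisfy: a(1) = 1, a(2) = 2, and for every n ≥ 2, a(n+1) is the smallest positive integer not among a(1), …, a(n) whose greatest common divisor with a(n) exceeds 1. If p is an odd prime and a(n) = p for some n, then n ≥ 2 and either a(n−1) = 2p or a(n+1) = 2p; that is, 2p is the term immediately before or immediately after p in the sequence. -/
import Mathlib


/-- The EKG sequence property: `a 1 = 1`, `a 2 = 2`, and for `n ≥ 2`,
`a (n+1)` is the smallest positive integer not among `a 1, …, a n`
whose gcd with `a n` exceeds 1. -/
def IsEKG (a : ℕ → ℕ) : Prop :=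
  a 1 = 1 ∧ a 2 = 2 ∧
    ∀ n, 2 ≤ n →
      IsLeast {m : ℕ | 0 < m ∧ (∀ i, 1 ≤ i → i ≤ n → a i ≠ m) ∧
        1 < Nat.gcd m (a n)} (a (n + 1))

theorem ekg_prime_neighbor (a : ℕ → ℕ) (ha : IsEKG a) (p : ℕ) (hp : p.Prime)
    (hodd : Odd p) (n : ℕ) (hn1 : 1 ≤ n) (hn : a n = p) :
    2 ≤ n ∧ (a (n - 1) = 2 * p ∨ a (n + 1) = 2 * p) := by
  obtain ⟨h1, h2, hspec⟩ := ha
  have hp1 : 1 < p := hp.one_lt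
  have hp2 : p ≠ 2 := by
    rintro rfl
    rw [Nat.odd_iff] at hodd
    omega
  -- the sequence is injective (values never repeat)
  have hne : ∀ i j, 1 ≤ i → i < j → a i ≠ a j := by
    intro i j hi hij
    rcases Nat.lt_or_ge j 3 with hj | hj
    · have hj2 : j = 2 := by omega
      have hi1 : i = 1 := by omega
      subst hj2; subst hi1
      rw [h1, h2]; omega
    · obtain ⟨m, rfl⟩ : ∃ m, j = m + 1 := ⟨j - 1, by omega⟩
      exact (hspec m (by omega)).1.2.1 i hi (by omega)
  have hn3 : 3 ≤ n := by
    rcases Nat.lt_or_ge n 3 with h | h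
    · interval_cases n
      · rw [h1] at hn; omega
      · rw [h2] at hn; omega
    · exact h
  refine ⟨by omega, ?_⟩
  -- p does not appear before index n
  have hfresh_p : ∀ i, 1 ≤ i → i < n → a i ≠ p := by
    intro i hi hilt
    rw [← hn]; exact hne i n hi hilt
  -- a (n-1) is a positive multiple of p
  have hnn : n - 1 + 1 = n := by omega
  have hS := hspec (n - 1) (by omega)
  rw [hnn] at hS
  have hgcd : 1 < Nat.gcd (a n) (a (n - 1)) := hS.1.2.2
  rw [hn] at hgcd
  have hpdvd : p ∣ a (n - 1) := by
    have h := Nat.gcd_dvd_left p (a (n - 1))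
    rcases (Nat.dvd_prime hp).mp h with h' | h'
    · omega
    · rw [← h']; exact Nat.gcd_dvd_right p (a (n - 1))
  by_cases hcase : a (n - 1) = 2 * p
  · exact Or.inl hcase
  right
  -- key claim: 2p does not appear among a 1, ..., a n
  have hfresh2p : ∀ j, 1 ≤ j → j ≤ n → a j ≠ 2 * p := by
    intro j hj hjn h2p
    have hj3 : 3 ≤ j := by
      rcases Nat.lt_or_ge j 3 with h | h
      · interval_cases j
        · rw [h1] at h2p; omega
        · rw [h2] at h2p; omega
      · exact h
    have hjn' : j + 1 < n := by
      by_contra hcon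
      have hor : j = n - 1 ∨ j = n := by omega
      rcases hor with h | h
      · rw [h] at h2p; exact hcase h2p
      · rw [h, hn] at h2p; omega
    -- the step that chose a j = 2p
    have hjj : j - 1 + 1 = j := by omega
    have hSj := hspec (j - 1) (by omega)
    rw [hjj] at hSj
    have hg : 1 < Nat.gcd (2 * p) (a (j - 1)) := by rw [← h2p]; exact hSj.1.2.2
    obtain ⟨q, hq, hqd⟩ := Nat.exists_prime_and_dvd
      (by omega : Nat.gcd (2 * p) (a (j - 1)) ≠ 1)
    have hqm : q ∣ 2 * p := hqd.trans (Nat.gcd_dvd_left _ _)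
    have hqa : q ∣ a (j - 1) := hqd.trans (Nat.gcd_dvd_right _ _)
    rcases (Nat.Prime.dvd_mul hq).mp hqm with hq2 | hqp
    · -- a (j-1) is even : all even numbers < 2p were already used before step j
      have hq2' : q = 2 := (Nat.prime_dvd_prime_iff_eq hq Nat.prime_two).mp hq2
      subst hq2'
      have hevenused : ∀ m, 0 < m → 2 ∣ m → m < 2 * p →
          ¬ (∀ i, 1 ≤ i → i ≤ j - 1 → a i ≠ m) := by
        intro m hm hm2 hmlt hfr
        have hgd : 2 ∣ Nat.gcd m (a (j - 1)) := Nat.dvd_gcd hm2 hqa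
        have hg2 : 2 ≤ Nat.gcd m (a (j - 1)) :=
          Nat.le_of_dvd (Nat.gcd_pos_of_pos_left _ hm) hgd
        have hmem : m ∈ {m : ℕ | 0 < m ∧ (∀ i, 1 ≤ i → i ≤ j - 1 → a i ≠ m) ∧
            1 < Nat.gcd m (a (j - 1))} := ⟨hm, hfr, by omega⟩
        have hle := hSj.2 hmem
        rw [h2p] at hle
        omega
      -- then the next term after 2p must be p, so j + 1 = n, contradiction
      have hTj := hspec j (by omega)
      have hpmem : p ∈ {m : ℕ | 0 < m ∧ (∀ i, 1 ≤ i → i ≤ j → a i ≠ m) ∧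
          1 < Nat.gcd m (a j)} := by
        refine ⟨by omega, fun i hi hij => hfresh_p i hi (by omega), ?_⟩
        rw [h2p]
        have hge : Nat.gcd p (2 * p) = p := Nat.gcd_eq_left ⟨2, by ring⟩
        omega
      have hplb : ∀ m ∈ {m : ℕ | 0 < m ∧ (∀ i, 1 ≤ i → i ≤ j → a i ≠ m) ∧
          1 < Nat.gcd m (a j)}, p ≤ m := by
        rintro m ⟨hm0, hmfresh, hmg⟩
        by_contra hlt
        push_neg at hlt
        rw [h2p] at hmg
        obtain ⟨q', hq', hqd'⟩ := Nat.exists_prime_and_dvd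
          (by omega : Nat.gcd m (2 * p) ≠ 1)
        have hq'm : q' ∣ m := hqd'.trans (Nat.gcd_dvd_left _ _)
        have hq'2p : q' ∣ 2 * p := hqd'.trans (Nat.gcd_dvd_right _ _)
        rcases (Nat.Prime.dvd_mul hq').mp hq'2p with hA | hB
        · have hqe : q' = 2 := (Nat.prime_dvd_prime_iff_eq hq' Nat.prime_two).mp hA
          subst hqe
          exact hevenused m hm0 hq'm (by omega)
            (fun i hi hij => hmfresh i hi (by omega))
        · have hqe : q' = p := (Nat.prime_dvd_prime_iff_eq hq' hp).mp hB
          rw [hqe] at hq'm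
          have := Nat.le_of_dvd hm0 hq'm
          omega
      have hap : a (j + 1) = p := le_antisymm (hTj.2 hpmem) (hplb _ hTj.1)
      exact hfresh_p (j + 1) (by omega) hjn' hap
    · -- p ∣ a (j-1): then p itself was a smaller candidate at step j, contradiction
      have hqe : q = p := (Nat.prime_dvd_prime_iff_eq hq hp).mp hqp
      rw [hqe] at hqa
      have hpmem' : p ∈ {m : ℕ | 0 < m ∧ (∀ i, 1 ≤ i → i ≤ j - 1 → a i ≠ m) ∧
          1 < Nat.gcd m (a (j - 1))} := by
        refine ⟨by omega, fun i hi hij => hfresh_p i hi (by omega), ?_⟩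
        have hge : Nat.gcd p (a (j - 1)) = p := Nat.gcd_eq_left hqa
        omega
      have hle := hSj.2 hpmem'
      rw [h2p] at hle
      omega
  -- final step: a (n+1) = 2p
  have hT := hspec n (by omega)
  have h2pmem : 2 * p ∈ {m : ℕ | 0 < m ∧ (∀ i, 1 ≤ i → i ≤ n → a i ≠ m) ∧
      1 < Nat.gcd m (a n)} := by
    refine ⟨by omega, hfresh2p, ?_⟩
    rw [hn]
    have hge : Nat.gcd (2 * p) p = p := by
      rw [Nat.gcd_comm]; exact Nat.gcd_eq_left ⟨2, by ring⟩
    omega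
  have hlb : ∀ m ∈ {m : ℕ | 0 < m ∧ (∀ i, 1 ≤ i → i ≤ n → a i ≠ m) ∧
      1 < Nat.gcd m (a n)}, 2 * p ≤ m := by
    rintro m ⟨hm0, hmfresh, hmg⟩
    rw [hn] at hmg
    have hpm : p ∣ m := by
      have h := Nat.gcd_dvd_right m p
      rcases (Nat.dvd_prime hp).mp h with h' | h'
      · omega
      · rw [← h']; exact Nat.gcd_dvd_left m p
    have hmne : m ≠ p := fun h => hmfresh n (by omega) le_rfl (hn.trans h.symm)
    obtain ⟨c, rfl⟩ := hpm
    have hc0 : c ≠ 0 := by rintro rfl; simp at hm0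
    have hc1 : c ≠ 1 := by rintro rfl; simp at hmne
    have hc2 : 2 ≤ c := by omega
    calc 2 * p = p * 2 := by ring
      _ ≤ p * c := Nat.mul_le_mul_left p hc2
  exact le_antisymm (hT.2 h2pmem) (hlb _ hT.1)
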